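/- Let D be a subset of the unit sphere of a real Hilbert space H such that the linear span of D equals H and the set Λ(D) = { λ g : λ ∈ ℝ, g ∈ D } is weakly closed. Then there exists K ∈ ℕ such that every element of H is a linear combination of at most K elements of D. -/

import Mathlib

open Metric Set InnerProductSpace

section Aux
variable {H : Type*} [NormedAddCommGroup H] [InnerProductSpace ℝ H] [CompleteSpace H]

lemma aux_flip_injective : Function.Injective ((topDualPairing ℝ H).flip) := by
  intro x y h
  have hxy : ∀ f : StrongDual ℝ H, f x = f y := by
    intro f
    have := congrArg (fun g => g f) h
    simpa [topDualPairing] using this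
  have := hxy (toDual ℝ H (x - y))
  have h2 : ⟪x - y, x - y⟫_ℝ = 0 := by
    rw [toDual_apply_apply, toDual_apply_apply] at this
    simp [inner_sub_right] at this ⊢
    rw [← sub_eq_zero, ← inner_sub_right, inner_self_eq_zero, sub_eq_zero] at this; simp [this]
  have := inner_self_eq_zero.mp h2
  exact sub_eq_zero.mp this

lemma aux_t2 : T2Space (WeakSpace ℝ H) :=
  (WeakBilin.isEmbedding (B := (topDualPairing ℝ H).flip) aux_flip_injective).t2Space

lemma aux_riesz_cont : Continuous fun f : WeakDual ℝ H =>
    (toWeakSpace ℝ H ((toDual ℝ H).symm f)) := by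
  apply WeakBilin.continuous_of_continuous_eval
  intro y
  have hkey : ∀ f : WeakDual ℝ H,
      (topDualPairing ℝ H).flip (toWeakSpace ℝ H ((toDual ℝ H).symm f)) y
        = f ((toDual ℝ H).symm y) := by
    intro f
    have h1 : (topDualPairing ℝ H).flip (toWeakSpace ℝ H ((toDual ℝ H).symm f)) y
        = y ((toDual ℝ H).symm f) := rfl
    rw [h1, ← toDual_symm_apply (𝕜 := ℝ), real_inner_comm]; exact toDual_symm_apply
  simp_rw [hkey]
  exact WeakBilin.eval_continuous _ _

lemma aux_ball_wcompact (R : ℝ) :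
    IsCompact (toWeakSpace ℝ H '' Metric.closedBall 0 R) := by
  have hc := WeakDual.isCompact_closedBall (𝕜 := ℝ) (E := H) 0 R
  have himg := hc.image (aux_riesz_cont (H := H))
  convert himg using 1
  ext y
  constructor
  · rintro ⟨x, hx, rfl⟩
    rw [mem_closedBall_zero_iff] at hx
    refine ⟨toDual ℝ H x, ?_, by simp⟩
    show WeakDual.toStrongDual (toDual ℝ H x) ∈ closedBall 0 R; rw [mem_closedBall_zero_iff]
    exact ((toDual ℝ H).norm_map x).trans_le hx
  · rintro ⟨f, hf, rfl⟩
    simp only [Set.mem_preimage, mem_closedBall_zero_iff] at hf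
    refine ⟨(toDual ℝ H).symm f, ?_, rfl⟩
    rw [mem_closedBall_zero_iff]
    exact ((toDual ℝ H).symm.norm_map (WeakDual.toStrongDual f)).trans_le hf

end Aux

theorem exists_uniform_bound_of_weakly_closed_dictionary
    {H : Type*} [NormedAddCommGroup H] [InnerProductSpace ℝ H] [CompleteSpace H]
    (D : Set H) (hD : ∀ g ∈ D, ‖g‖ = 1)
    (hspan : Submodule.span ℝ D = ⊤)
    (hwclosed : IsClosed
      ((toWeakSpace ℝ H) '' {x : H | ∃ (l : ℝ) (g : H), g ∈ D ∧ x = l • g})) :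
    ∃ K : ℕ, ∀ x : H, ∃ (l : Fin K → ℝ) (g : Fin K → H),
      (∀ i, g i ∈ D) ∧ x = ∑ i, l i • g i := by
  classical
  have _t2 : T2Space (WeakSpace ℝ H) := aux_t2
  rcases D.eq_empty_or_nonempty with rfl | ⟨g₀, hg₀⟩
  · refine ⟨0, fun x => ⟨Fin.elim0, Fin.elim0, fun i => i.elim0, ?_⟩⟩
    have hx : x ∈ Submodule.span ℝ (∅ : Set H) := hspan ▸ Submodule.mem_top
    rw [Submodule.span_empty, Submodule.mem_bot] at hx
    simp [hx]
  set Λ : Set H := {x : H | ∃ (l : ℝ) (g : H), g ∈ D ∧ x = l • g} with hΛdef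
  -- the sets in the Baire argument
  set S : ℕ → Set H := fun n =>
    {x | ∃ t : Fin n → H, (∀ i, t i ∈ Λ) ∧ (∀ i, ‖t i‖ ≤ (n : ℝ)) ∧ x = ∑ i, t i} with hSdef
  have hSclosed : ∀ n, IsClosed (S n) := by
    intro n
    set C : Set (WeakSpace ℝ H) :=
      (toWeakSpace ℝ H '' Λ) ∩ (toWeakSpace ℝ H '' Metric.closedBall 0 (n : ℝ)) with hCdef
    have hCcomp : IsCompact C := (aux_ball_wcompact (n : ℝ)).inter_left hwclosed
    have hpi : IsCompact (Set.pi (univ : Set (Fin n)) (fun _ => C)) :=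
      isCompact_univ_pi fun _ => hCcomp
    have hsum : Continuous (fun t : Fin n → WeakSpace ℝ H => ∑ i, t i) :=
      continuous_finset_sum _ fun i _ => continuous_apply i
    have himg : IsCompact ((fun t : Fin n → WeakSpace ℝ H => ∑ i, t i) ''
        (Set.pi univ fun _ => C)) := hpi.image hsum
    have hSeq : S n = (toWeakSpaceCLM ℝ H) ⁻¹'
        ((fun t : Fin n → WeakSpace ℝ H => ∑ i, t i) '' (Set.pi univ fun _ => C)) := by
      ext x
      constructor
      · rintro ⟨t, htΛ, htn, rfl⟩
        refine ⟨fun i => toWeakSpace ℝ H (t i), fun i _ => ⟨⟨t i, htΛ i, rfl⟩, ⟨t i, ?_, rfl⟩⟩, ?_⟩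
        · rw [mem_closedBall_zero_iff]; exact htn i
        · simp only [toWeakSpaceCLM_eq_toWeakSpace]
          exact (map_sum (toWeakSpace ℝ H) t Finset.univ).symm
      · rintro ⟨t', ht', hsum'⟩
        have hmem : ∀ i, t' i ∈ C := fun i => ht' i (Set.mem_univ i)
        have hchoice : ∀ i, ∃ a : H, a ∈ Λ ∧ ‖a‖ ≤ (n : ℝ) ∧ toWeakSpace ℝ H a = t' i := by
          intro i
          obtain ⟨⟨a, haΛ, ha⟩, ⟨b, hb, hb'⟩⟩ := hmem i
          have hab : a = b := (toWeakSpace ℝ H).injective (ha.trans hb'.symm)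
          refine ⟨a, haΛ, ?_, ha⟩
          rw [hab]; exact mem_closedBall_zero_iff.mp hb
        choose t htΛ htn hteq using hchoice
        refine ⟨t, htΛ, htn, ?_⟩
        apply (toWeakSpace ℝ H).injective
        rw [map_sum]
        simp_rw [hteq]
        exact hsum'.symm
    rw [hSeq]
    exact himg.isClosed.preimage (toWeakSpaceCLM ℝ H).continuous
  have hScover : ⋃ n, S n = univ := by
    refine Set.eq_univ_of_forall fun x => Set.mem_iUnion.mpr ?_
    have hx : x ∈ Submodule.span ℝ D := hspan ▸ Submodule.mem_top
    obtain ⟨m, f, g, hsum⟩ := Submodule.mem_span_set'.mp hx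
    set c : ℕ := ⌈∑ i, |f i|⌉₊ with hc
    refine ⟨m + c, Fin.append (fun i => f i • (g i : H)) (fun _ => (0 : H)), ?_, ?_, ?_⟩
    · refine Fin.addCases ?_ ?_
      · intro i; rw [Fin.append_left]; exact ⟨f i, g i, (g i).2, rfl⟩
      · intro i; rw [Fin.append_right]; exact ⟨0, g₀, hg₀, by simp⟩
    · refine Fin.addCases ?_ ?_
      · intro i
        rw [Fin.append_left, norm_smul, hD (g i) (g i).2, mul_one]
        have h1 : |f i| ≤ ∑ j, |f j| :=
          Finset.single_le_sum (fun j _ => abs_nonneg (f j)) (Finset.mem_univ i)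
        have h2 : (∑ j, |f j|) ≤ (c : ℝ) := Nat.le_ceil _
        have h3 : (c : ℝ) ≤ ((m + c : ℕ) : ℝ) := by exact_mod_cast Nat.le_add_left c m
        calc ‖f i‖ = |f i| := rfl
          _ ≤ _ := h1.trans (h2.trans h3)
      · intro i
        rw [Fin.append_right]
        simp only [norm_zero]
        positivity
    · rw [Fin.sum_univ_add]
      simp only [Fin.append_left, Fin.append_right]
      simp [hsum]
  obtain ⟨n, x₀, hx₀⟩ := nonempty_interior_of_iUnion_of_closed hSclosed hScover
  rw [mem_interior_iff_mem_nhds, Metric.mem_nhds_iff] at hx₀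
  obtain ⟨ε, hε, hball⟩ := hx₀
  refine ⟨n + n, fun x => ?_⟩
  by_cases hx0 : x = 0
  · exact ⟨0, fun _ => g₀, fun _ => hg₀, by simp [hx0]⟩
  have hxn : 0 < ‖x‖ := norm_pos_iff.mpr hx0
  set cc : ℝ := ε / (2 * ‖x‖) with hccdef
  have hcc : 0 < cc := div_pos hε (by positivity)
  have hy : x₀ + cc • x ∈ S n := by
    apply hball
    rw [mem_ball_iff_norm]
    have : x₀ + cc • x - x₀ = cc • x := by abel
    rw [this, norm_smul, Real.norm_eq_abs, abs_of_pos hcc, hccdef]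
    rw [div_mul_eq_mul_div, mul_comm]
    rw [div_lt_iff₀ (by positivity)]
    nlinarith [hε, hxn]
  have hx₀S : x₀ ∈ S n := hball (mem_ball_self hε)
  obtain ⟨t, htΛ, -, hteq⟩ := hy
  obtain ⟨u, huΛ, -, hueq⟩ := hx₀S
  choose lt gt hgtD hteq' using htΛ
  choose lu gu hguD hueq' using huΛ
  refine ⟨Fin.append (fun i => cc⁻¹ * lt i) (fun i => -(cc⁻¹ * lu i)),
    Fin.append gt gu, ?_, ?_⟩
  · refine Fin.addCases ?_ ?_
    · intro i; rw [Fin.append_left]; exact hgtD i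
    · intro i; rw [Fin.append_right]; exact hguD i
  · rw [Fin.sum_univ_add]
    simp only [Fin.append_left, Fin.append_right]
    have h1 : ∑ i : Fin n, (cc⁻¹ * lt i) • gt i = cc⁻¹ • (x₀ + cc • x) := by
      simp_rw [mul_smul, ← hteq', ← Finset.smul_sum, ← hteq]
    have h2 : ∑ i : Fin n, (-(cc⁻¹ * lu i)) • gu i = -(cc⁻¹ • x₀) := by
      simp_rw [neg_smul, mul_smul, ← hueq', Finset.sum_neg_distrib, ← Finset.smul_sum, ← hueq]
    rw [h1, h2, smul_add, smul_smul, inv_mul_cancel₀ hcc.ne', one_smul]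
    abel
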